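/- If G is a finite sum of star-based numbers (games of the form *:x for dyadic rationals x), then the normal-play outcome of G equals the misère-play outcome of G + *, and the normal-play outcome of G + * equals the misère-play outcome of G. -/

import Mathlib

namespace SetTheory

universe u

/-- Mathlib's former `SetTheory.PGame` (removed from Mathlib), with its old definitions. -/
inductive PGame : Type (u + 1)
  | mk : ∀ α β : Type u, (α → PGame) → (β → PGame) → PGame

namespace PGame

def LeftMoves : PGame → Type u
  | mk l _ _ _ => l

def RightMoves : PGame → Type u
  | mk _ r _ _ => r

def moveLeft : ∀ g : PGame, LeftMoves g → PGame
  | mk _l _ L _ => L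

def moveRight : ∀ g : PGame, RightMoves g → PGame
  | mk _ _r _ R => R

instance : Zero PGame := ⟨⟨PEmpty, PEmpty, PEmpty.elim, PEmpty.elim⟩⟩

def neg : PGame → PGame
  | ⟨l, r, L, R⟩ => ⟨r, l, fun i => neg (R i), fun i => neg (L i)⟩

instance : Neg PGame := ⟨neg⟩

def addAux (xl xr : Type u) (fL : xl → PGame.{u} → PGame.{u}) (fR : xr → PGame.{u} → PGame.{u}) :
    PGame.{u} → PGame.{u}
  | mk yl yr yL yR =>
    mk (xl ⊕ yl) (xr ⊕ yr)
      (Sum.elim (fun i => fL i (mk yl yr yL yR)) (fun j => addAux xl xr fL fR (yL j)))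
      (Sum.elim (fun i => fR i (mk yl yr yL yR)) (fun j => addAux xl xr fL fR (yR j)))

def add : PGame.{u} → PGame.{u} → PGame.{u}
  | mk xl xr xL xR => addAux xl xr (fun i => add (xL i)) (fun i => add (xR i))

instance : Add PGame.{u} := ⟨add⟩

def star : PGame.{u} := ⟨PUnit, PUnit, fun _ => 0, fun _ => 0⟩

inductive IsOption : PGame → PGame → Prop
  | moveLeft {x : PGame} (i : x.LeftMoves) : IsOption (x.moveLeft i) x
  | moveRight {x : PGame} (i : x.RightMoves) : IsOption (x.moveRight i) x

def Subsequent : PGame → PGame → Prop :=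
  Relation.TransGen IsOption

end PGame

end SetTheory

open SetTheory

namespace Sprigs

/-- Partizan games (in the lowest universe). -/
abbrev PG : Type 1 := PGame.{0}

/-- Winning predicates moving first under misère play:
`(mw G).1` = Left wins moving first; `(mw G).2` = Right wins moving first. -/
def mw : PG → Prop × Prop
  | PGame.mk α β L R =>
    ((IsEmpty α ∨ ∃ i, ¬ (mw (L i)).2), (IsEmpty β ∨ ∃ j, ¬ (mw (R j)).1))

/-- Winning predicates moving first under normal play. -/
def nw : PG → Prop × Prop
  | PGame.mk _ _ L R => ((∃ i, ¬ (nw (L i)).2), (∃ j, ¬ (nw (R j)).1))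

/-- Outcome classes. -/
inductive Outcome : Type
  | L | R | N | P
deriving DecidableEq

/-- The outcome determined by "Left wins moving first" and "Right wins moving first". -/
noncomputable def outcomeOf (wl wr : Prop) : Outcome :=
  haveI := Classical.propDecidable wl
  haveI := Classical.propDecidable wr
  if wl then (if wr then .N else .L) else (if wr then .R else .P)

/-- Misère-play outcome. -/
noncomputable def mo (G : PG) : Outcome := outcomeOf (mw G).1 (mw G).2

/-- Normal-play outcome. -/
noncomputable def no (G : PG) : Outcome := outcomeOf (nw G).1 (nw G).2

/-- Partial order on outcomes: R < P < L and R < N < L, with P, N incomparable. -/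
def Outcome.le : Outcome → Outcome → Prop
  | .R, _ => True
  | _, .L => True
  | a, b => a = b

def Outcome.lt (a b : Outcome) : Prop := Outcome.le a b ∧ a ≠ b

/-- Dicot games: every subposition has moves for both players or neither. -/
def Dicot : PG → Prop
  | PGame.mk α β L R =>
    ((IsEmpty α ∧ IsEmpty β) ∨ (Nonempty α ∧ Nonempty β)) ∧
      (∀ i, Dicot (L i)) ∧ (∀ j, Dicot (R j))

/-- Ordinal sum `G : H`. -/
def ordSum (G : PG) : PG → PGame
  | PGame.mk α β L R =>
    PGame.mk (G.LeftMoves ⊕ α) (G.RightMoves ⊕ β)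
      (Sum.elim G.moveLeft (fun a => ordSum G (L a)))
      (Sum.elim G.moveRight (fun b => ordSum G (R b)))

/-- Canonical form of a natural number as a game. -/
def natGame : ℕ → PGame
  | 0 => PGame.mk PEmpty PEmpty PEmpty.elim PEmpty.elim
  | n + 1 => PGame.mk PUnit PEmpty (fun _ => natGame n) PEmpty.elim

/-- Canonical form of an integer as a game. -/
def intGame (m : ℤ) : PG := if 0 ≤ m then natGame m.toNat else -natGame (-m).toNat

/-- Canonical form of the dyadic rational `m / 2 ^ n` as a game. -/
def dGame : ℕ → ℤ → PGame
  | 0, m => intGame m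
  | n + 1, m =>
    if m % 2 = 0 then dGame n (m / 2)
    else PGame.mk PUnit PUnit (fun _ => dGame n ((m - 1) / 2)) (fun _ => dGame n ((m + 1) / 2))

/-- A rational number is dyadic if its denominator is a power of two. -/
def IsDyadic (q : ℚ) : Prop := ∃ n : ℕ, q.den = 2 ^ n

/-- The canonical-form game of a dyadic rational. -/
def qGame (q : ℚ) : PG := dGame (Nat.log 2 q.den) q.num

/-- The Sprig `* : x` for a dyadic rational `x`. -/
def sprig (q : ℚ) : PG := ordSum PGame.star (qGame q)

/-- The Sprig `* : x̄` where `x̄` is the conjugate of the dyadic rational `x`. -/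
def sprigNeg (q : ℚ) : PG := ordSum PGame.star (-qGame q)

/-- Disjunctive sum of a list of games. -/
def listSum (l : List PG) : PG := l.foldr (· + ·) 0

/-- The position `(X, Y) = Σ_{x ∈ X} *:x + Σ_{y ∈ Y} *:(-y)`. -/
def sprigsGame (X Y : List ℚ) : PG := listSum (X.map sprig ++ Y.map sprigNeg)

/-- The minimum of a nonempty multiset of rationals (0 for the empty multiset). -/
noncomputable def mmin (s : Multiset ℚ) : ℚ :=
  if h : s = 0 then 0 else
    s.toFinset.min' (by rwa [Multiset.toFinset_nonempty])

/-- The edge `ε` computed from the reduced multisets `X' = X \ Y` and `Y' = Y \ X`. -/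
noncomputable def edge (X Y : Multiset ℚ) : ℚ :=
  if X - Y = 0 ∨ Y - X = 0 then 0 else mmin (X - Y) - mmin (Y - X)

/-- The universe `S` of finite sums of Sprigs (and `*`). -/
inductive InS : PG → Prop
  | star : InS PGame.star
  | sprig {q : ℚ} (h : IsDyadic q) : InS (sprig q)
  | sprigNeg {q : ℚ} (h : IsDyadic q) : InS (sprigNeg q)
  | add {a b : PG} : InS a → InS b → InS (a + b)

/-- A universe: a set of games closed under disjunctive sum and followers. -/
def IsUniverse (S : Set PG) : Prop :=
  (∀ a ∈ S, ∀ b ∈ S, a + b ∈ S) ∧ ∀ a ∈ S, ∀ b, PGame.Subsequent b a → b ∈ S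

/-- Finite sums of star-based numbers `*:x` (for dyadic rationals `x`). -/
inductive SumOfStarBased : PG → Prop
  | zero : SumOfStarBased 0
  | addPos {q : ℚ} {G : PG} (h : IsDyadic q) : SumOfStarBased G → SumOfStarBased (sprig q + G)
  | addNeg {q : ℚ} {G : PG} (h : IsDyadic q) : SumOfStarBased G → SumOfStarBased (sprigNeg q + G)

end Sprigs

namespace SetTheory

universe u

namespace PGame

theorem moveRecOn {C : PGame.{u} → Prop} (x : PGame.{u})
    (IH : ∀ y : PGame.{u}, (∀ i, C (y.moveLeft i)) → (∀ j, C (y.moveRight j)) → C y) : C x :=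
  PGame.rec (motive := C) (fun yl yr yL yR ihL ihR => IH (mk yl yr yL yR) ihL ihR) x

theorem wf_isOption : WellFounded IsOption.{u} :=
  ⟨fun x => moveRecOn x fun y ihL ihR => Acc.intro y fun z h => by
    cases h with
    | moveLeft i => exact ihL i
    | moveRight j => exact ihR j⟩

theorem wf_subsequent : WellFounded Subsequent.{u} := wf_isOption.transGen

instance : WellFoundedRelation PGame.{u} := ⟨Subsequent, wf_subsequent⟩

theorem Subsequent.moveLeft (x : PGame.{u}) (i : x.LeftMoves) : Subsequent (x.moveLeft i) x :=
  Relation.TransGen.single (IsOption.moveLeft i)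

theorem Subsequent.moveRight (x : PGame.{u}) (j : x.RightMoves) : Subsequent (x.moveRight j) x :=
  Relation.TransGen.single (IsOption.moveRight j)

theorem Subsequent.moveRight_moveLeft (x : PGame.{u}) (j : x.RightMoves)
    (i : (x.moveRight j).LeftMoves) : Subsequent ((x.moveRight j).moveLeft i) x :=
  Relation.TransGen.head (IsOption.moveLeft i) (Relation.TransGen.single (IsOption.moveRight j))

theorem Subsequent.mk_left {xl xr : Type u} (xL : xl → PGame.{u}) (xR : xr → PGame.{u}) (i : xl) :
    Subsequent (xL i) (mk xl xr xL xR) :=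
  Subsequent.moveLeft (mk xl xr xL xR) i

theorem Subsequent.mk_right {xl xr : Type u} (xL : xl → PGame.{u}) (xR : xr → PGame.{u}) (j : xr) :
    Subsequent (xR j) (mk xl xr xL xR) :=
  Subsequent.moveRight (mk xl xr xL xR) j

noncomputable def leLF (x : PGame.{u}) : PGame.{u} → Prop × Prop :=
  PGame.rec (motive := fun _ => PGame.{u} → Prop × Prop)
    (fun _ _ _ _ ihL ihR y =>
      PGame.rec (motive := fun _ => Prop × Prop)
        (fun yl yr yL yR jhL jhR =>
          ((∀ i, (ihL i (mk yl yr yL yR)).2) ∧ (∀ j, (jhR j).2),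
            (∃ i, (jhL i).1) ∨ (∃ j, (ihR j (mk yl yr yL yR)).1))) y) x

instance : LE PGame.{u} := ⟨fun x y => (leLF x y).1⟩

def LF (x y : PGame.{u}) : Prop := (leLF x y).2

infixl:50 " ⧏ " => LF

theorem pg_le_def (x y : PGame.{u}) :
    x ≤ y ↔ (∀ i, x.moveLeft i ⧏ y) ∧ ∀ j, x ⧏ y.moveRight j := by
  cases x; cases y; exact Iff.rfl

theorem pg_lf_def (x y : PGame.{u}) :
    x ⧏ y ↔ (∃ i, x ≤ y.moveLeft i) ∨ ∃ j, x.moveRight j ≤ y := by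
  cases x; cases y; exact Iff.rfl

theorem not_le_lf (x y : PGame.{u}) : (¬ x ≤ y ↔ y ⧏ x) ∧ (¬ x ⧏ y ↔ y ≤ x) := by
  induction x using moveRecOn generalizing y with
  | _ x IHxl IHxr =>
  induction y using moveRecOn with
  | _ y IHyl IHyr =>
  constructor
  · rw [pg_le_def x y, pg_lf_def y x, not_and_or, not_forall, not_forall]
    exact or_congr (exists_congr fun i => (IHxl i y).2) (exists_congr fun j => (IHyr j).2)
  · rw [pg_lf_def x y, pg_le_def y x, not_or, not_exists, not_exists]
    exact and_congr (forall_congr' fun i => (IHyl i).1) (forall_congr' fun j => (IHxr j y).1)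

theorem not_le {x y : PGame.{u}} : ¬ x ≤ y ↔ y ⧏ x := (not_le_lf x y).1

theorem not_lf {x y : PGame.{u}} : ¬ x ⧏ y ↔ y ≤ x := (not_le_lf x y).2

theorem pg_le_refl (x : PGame.{u}) : x ≤ x := by
  induction x using moveRecOn with
  | _ x IHl IHr =>
  exact (pg_le_def x x).2 ⟨fun i => (pg_lf_def _ _).2 (Or.inl ⟨i, IHl i⟩),
    fun j => (pg_lf_def _ _).2 (Or.inr ⟨j, IHr j⟩)⟩

theorem pg_le_trans_aux {x y z : PGame.{u}}
    (h₁ : ∀ i, y ≤ z → z ≤ x.moveLeft i → y ≤ x.moveLeft i)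
    (h₂ : ∀ j, z.moveRight j ≤ x → x ≤ y → z.moveRight j ≤ y) (hxy : x ≤ y) (hyz : y ≤ z) :
    x ≤ z :=
  (pg_le_def x z).2
    ⟨fun i => PGame.not_le.1 fun h => PGame.not_lf.2 (h₁ i hyz h) (((pg_le_def x y).1 hxy).1 i),
      fun j => PGame.not_le.1 fun h => PGame.not_lf.2 (h₂ j h hxy) (((pg_le_def y z).1 hyz).2 j)⟩

theorem pg_le_trans3 (x y z : PGame.{u}) :
    (x ≤ y → y ≤ z → x ≤ z) ∧ (y ≤ z → z ≤ x → y ≤ x) ∧ (z ≤ x → x ≤ y → z ≤ y) := by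
  induction x using moveRecOn generalizing y z with
  | _ x IHxl IHxr =>
  induction y using moveRecOn generalizing z with
  | _ y IHyl IHyr =>
  induction z using moveRecOn with
  | _ z IHzl IHzr =>
  exact ⟨pg_le_trans_aux (fun i => (IHxl i y z).2.1) (fun j => (IHzr j).2.2),
    pg_le_trans_aux (fun i => (IHyl i z).2.2) (fun j => (IHxr j y z).1),
    pg_le_trans_aux (fun i => (IHzl i).1) (fun j => (IHyr j z).2.1)⟩

instance : Preorder PGame.{u} where
  le := (· ≤ ·)
  le_refl := pg_le_refl
  le_trans x y z := (pg_le_trans3 x y z).1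

theorem lt_iff_le_and_lf {x y : PGame.{u}} : x < y ↔ x ≤ y ∧ x ⧏ y := by
  rw [lt_iff_le_not_ge, PGame.not_le]

theorem lf_of_lt {x y : PGame.{u}} (h : x < y) : x ⧏ y := (lt_iff_le_and_lf.1 h).2

theorem pg_lf_of_le_of_lf {x y z : PGame.{u}} (h1 : x ≤ y) (h2 : y ⧏ z) : x ⧏ z :=
  PGame.not_le.1 fun h => PGame.not_lf.2 (le_trans h h1) h2

theorem pg_lf_of_lf_of_le {x y z : PGame.{u}} (h1 : x ⧏ y) (h2 : y ≤ z) : x ⧏ z :=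
  PGame.not_le.1 fun h => PGame.not_lf.2 (le_trans h2 h) h1

theorem zero_le_lf {x : PGame.{u}} : 0 ≤ x ↔ ∀ j, 0 ⧏ x.moveRight j := by
  rw [pg_le_def]; exact ⟨fun h => h.2, fun h => ⟨fun i => PEmpty.elim i, h⟩⟩

theorem le_zero_lf {x : PGame.{u}} : x ≤ 0 ↔ ∀ i, x.moveLeft i ⧏ 0 := by
  rw [pg_le_def]; exact ⟨fun h => h.1, fun h => ⟨h, fun j => PEmpty.elim j⟩⟩

theorem zero_lf_le {x : PGame.{u}} : 0 ⧏ x ↔ ∃ i, 0 ≤ x.moveLeft i := by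
  rw [pg_lf_def]; exact ⟨fun h => h.resolve_right (fun ⟨j, _⟩ => PEmpty.elim j), Or.inl⟩

theorem lf_zero_le {x : PGame.{u}} : x ⧏ 0 ↔ ∃ j, x.moveRight j ≤ 0 := by
  rw [pg_lf_def]; exact ⟨fun h => h.resolve_left (fun ⟨i, _⟩ => PEmpty.elim i), Or.inr⟩

instance isEmpty_zero_leftMoves : IsEmpty (LeftMoves (0 : PGame.{u})) := PEmpty.instIsEmpty

theorem pg_neg_zero : -(0 : PGame.{u}) = 0 := by
  show mk _ _ _ _ = mk _ _ _ _
  congr 1 <;> funext i <;> exact PEmpty.elim i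

instance : NegZeroClass PGame.{u} where
  zero := 0
  neg := fun x => -x
  neg_zero := pg_neg_zero

theorem neg_def {xl xr : Type u} {xL : xl → PGame.{u}} {xR : xr → PGame.{u}} :
    -(mk xl xr xL xR) = mk xr xl (fun j => -xR j) (fun i => -xL i) := rfl

theorem pg_neg_le_lf_neg_iff (x y : PGame.{u}) : (-y ≤ -x ↔ x ≤ y) ∧ (-y ⧏ -x ↔ x ⧏ y) := by
  induction x using moveRecOn generalizing y with
  | _ x IHxl IHxr =>
  induction y using moveRecOn with
  | _ y IHyl IHyr =>
  obtain ⟨xl, xr, xL, xR⟩ := x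
  obtain ⟨yl, yr, yL, yR⟩ := y
  constructor
  · rw [pg_le_def, pg_le_def]
    exact ⟨fun ⟨h1, h2⟩ => ⟨fun i => (IHxl i _).2.1 (h2 i), fun j => (IHyr j).2.1 (h1 j)⟩,
      fun ⟨h1, h2⟩ => ⟨fun j => (IHyr j).2.2 (h2 j), fun i => (IHxl i _).2.2 (h1 i)⟩⟩
  · rw [pg_lf_def, pg_lf_def]
    exact ⟨fun h => h.elim (fun ⟨i, hi⟩ => Or.inr ⟨i, (IHxr i _).1.1 hi⟩)
        (fun ⟨j, hj⟩ => Or.inl ⟨j, (IHyl j).1.1 hj⟩),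
      fun h => h.elim (fun ⟨i, hi⟩ => Or.inr ⟨i, (IHyl i).1.2 hi⟩)
        (fun ⟨j, hj⟩ => Or.inl ⟨j, (IHxr j _).1.2 hj⟩)⟩

theorem zero_le_neg_iff {x : PGame.{u}} : 0 ≤ -x ↔ x ≤ 0 := by
  have := (pg_neg_le_lf_neg_iff x 0).1; rwa [pg_neg_zero] at this

theorem neg_le_zero_iff {x : PGame.{u}} : -x ≤ 0 ↔ 0 ≤ x := by
  have := (pg_neg_le_lf_neg_iff 0 x).1; rwa [pg_neg_zero] at this

theorem zero_lf_neg_iff {x : PGame.{u}} : 0 ⧏ -x ↔ x ⧏ 0 := by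
  have := (pg_neg_le_lf_neg_iff x 0).2; rwa [pg_neg_zero] at this

theorem neg_lf_zero_iff {x : PGame.{u}} : -x ⧏ 0 ↔ 0 ⧏ x := by
  have := (pg_neg_le_lf_neg_iff 0 x).2; rwa [pg_neg_zero] at this

theorem zero_lt_neg_iff {x : PGame.{u}} : 0 < -x ↔ x < 0 := by
  rw [lt_iff_le_and_lf, lt_iff_le_and_lf, PGame.zero_le_neg_iff, PGame.zero_lf_neg_iff]

theorem neg_lt_zero_iff {x : PGame.{u}} : -x < 0 ↔ 0 < x := by
  rw [lt_iff_le_and_lf, lt_iff_le_and_lf, PGame.neg_le_zero_iff, PGame.neg_lf_zero_iff]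

theorem neg_star : -PGame.star.{u} = PGame.star := by
  show mk _ _ (fun _ => (-0 : PGame.{u})) (fun _ => (-0 : PGame.{u})) =
    mk _ _ (fun _ => (0 : PGame.{u})) (fun _ => (0 : PGame.{u}))
  rw [pg_neg_zero]

theorem star_fuzzy_zero : PGame.star.{u} ⧏ 0 ∧ 0 ⧏ PGame.star.{u} :=
  ⟨lf_zero_le.2 ⟨PUnit.unit, le_rfl⟩, zero_lf_le.2 ⟨PUnit.unit, le_rfl⟩⟩

def toLeftMovesAdd {x y : PGame.{u}} : x.LeftMoves ⊕ y.LeftMoves ≃ (x + y).LeftMoves := by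
  cases x; cases y; exact Equiv.refl _

theorem add_moveLeft_inl {x y : PGame.{u}} (i : x.LeftMoves) :
    (x + y).moveLeft (toLeftMovesAdd (Sum.inl i)) = x.moveLeft i + y := by
  cases x; cases y; rfl

theorem add_moveLeft_inr {x y : PGame.{u}} (i : y.LeftMoves) :
    (x + y).moveLeft (toLeftMovesAdd (Sum.inr i)) = x + y.moveLeft i := by
  cases x; cases y; rfl

theorem leftMoves_add_cases {x y : PGame.{u}} (k : (x + y).LeftMoves)
    {P : (x + y).LeftMoves → Prop}
    (hl : ∀ i, P (toLeftMovesAdd (Sum.inl i))) (hr : ∀ i, P (toLeftMovesAdd (Sum.inr i))) : P k := by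
  rw [← Equiv.apply_symm_apply toLeftMovesAdd k]
  cases toLeftMovesAdd.symm k with
  | inl i => exact hl i
  | inr i => exact hr i

theorem isEmpty_leftMoves_add (x y : PGame.{u}) [IsEmpty x.LeftMoves] [IsEmpty y.LeftMoves] :
    IsEmpty (x + y).LeftMoves :=
  (Equiv.isEmpty_congr toLeftMovesAdd).1 (isEmpty_sum.2 ⟨inferInstance, inferInstance⟩)

theorem pg_forall_leftMoves_add {x y : PGame.{u}} (p : PGame.{u} → Prop)
    (h1 : ∀ i, p (x.moveLeft i + y)) (h2 : ∀ j, p (x + y.moveLeft j)) :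
    ∀ k, p ((x + y).moveLeft k) := by
  cases x; cases y
  rintro (i | j)
  · exact h1 i
  · exact h2 j

theorem pg_forall_rightMoves_add {x y : PGame.{u}} (p : PGame.{u} → Prop)
    (h1 : ∀ i, p (x.moveRight i + y)) (h2 : ∀ j, p (x + y.moveRight j)) :
    ∀ k, p ((x + y).moveRight k) := by
  cases x; cases y
  rintro (i | j)
  · exact h1 i
  · exact h2 j

theorem lf_add_of_le_moveLeft_inl {w x y : PGame.{u}} (i : x.LeftMoves)
    (h : w ≤ x.moveLeft i + y) : w ⧏ x + y := by
  cases x; cases y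
  exact (pg_lf_def _ _).2 (Or.inl ⟨Sum.inl i, h⟩)

theorem lf_add_of_le_moveLeft_inr {w x y : PGame.{u}} (i : y.LeftMoves)
    (h : w ≤ x + y.moveLeft i) : w ⧏ x + y := by
  cases x; cases y
  exact (pg_lf_def _ _).2 (Or.inl ⟨Sum.inr i, h⟩)

theorem add_lf_of_moveRight_inl_le {w x y : PGame.{u}} (j : x.RightMoves)
    (h : x.moveRight j + y ≤ w) : x + y ⧏ w := by
  cases x; cases y
  exact (pg_lf_def _ _).2 (Or.inr ⟨Sum.inl j, h⟩)

theorem add_lf_of_moveRight_inr_le {w x y : PGame.{u}} (j : y.RightMoves)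
    (h : x + y.moveRight j ≤ w) : x + y ⧏ w := by
  cases x; cases y
  exact (pg_lf_def _ _).2 (Or.inr ⟨Sum.inr j, h⟩)

theorem pg_add_le_lf_add_right (x y z : PGame.{u}) :
    (x ≤ y → x + z ≤ y + z) ∧ (x ⧏ y → x + z ⧏ y + z) := by
  induction x using moveRecOn generalizing y z with
  | _ x IHxl IHxr =>
  induction y using moveRecOn generalizing z with
  | _ y IHyl IHyr =>
  induction z using moveRecOn with
  | _ z IHzl IHzr =>
  constructor
  · intro h
    have h' := (pg_le_def x y).1 h
    refine (pg_le_def _ _).2 ⟨pg_forall_leftMoves_add (fun w => w ⧏ y + z) (fun i => ?_) (fun i => ?_),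
      pg_forall_rightMoves_add (fun w => x + z ⧏ w) (fun j => ?_) (fun j => ?_)⟩
    · exact (IHxl i y z).2 (h'.1 i)
    · exact pg_lf_of_le_of_lf ((IHzl i).1 h) (lf_add_of_le_moveLeft_inr i le_rfl)
    · exact (IHyr j z).2 (h'.2 j)
    · exact pg_lf_of_lf_of_le (add_lf_of_moveRight_inr_le j le_rfl) ((IHzr j).1 h)
  · intro h
    rcases (pg_lf_def x y).1 h with ⟨i, hi⟩ | ⟨j, hj⟩
    · exact lf_add_of_le_moveLeft_inl i ((IHyl i z).1 hi)
    · exact add_lf_of_moveRight_inl_le j ((IHxr j y z).1 hj)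

theorem pg_equiv_of_moves {x y : PGame.{u}} (L : x.LeftMoves ≃ y.LeftMoves)
    (R : x.RightMoves ≃ y.RightMoves)
    (hL : ∀ i, x.moveLeft i ≤ y.moveLeft (L i) ∧ y.moveLeft (L i) ≤ x.moveLeft i)
    (hR : ∀ j, x.moveRight j ≤ y.moveRight (R j) ∧ y.moveRight (R j) ≤ x.moveRight j) :
    x ≤ y ∧ y ≤ x := by
  constructor
  · refine (pg_le_def x y).2 ⟨fun i => (pg_lf_def _ _).2 (Or.inl ⟨L i, (hL i).1⟩), fun j => ?_⟩
    obtain ⟨j, rfl⟩ := R.surjective j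
    exact (pg_lf_def _ _).2 (Or.inr ⟨j, (hR j).1⟩)
  · refine (pg_le_def y x).2 ⟨fun i => ?_, fun j => (pg_lf_def _ _).2 (Or.inr ⟨R j, (hR j).2⟩)⟩
    obtain ⟨i, rfl⟩ := L.surjective i
    exact (pg_lf_def _ _).2 (Or.inl ⟨i, (hL i).2⟩)

theorem pg_add_comm_equiv (x y : PGame.{u}) : x + y ≤ y + x ∧ y + x ≤ x + y := by
  induction x using moveRecOn generalizing y with
  | _ x IHxl IHxr =>
  induction y using moveRecOn with
  | _ y IHyl IHyr =>
  obtain ⟨xl, xr, xL, xR⟩ := x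
  obtain ⟨yl, yr, yL, yR⟩ := y
  refine pg_equiv_of_moves (Equiv.sumComm _ _) (Equiv.sumComm _ _) ?_ ?_
  · rintro (i | i)
    · exact IHxl i (mk yl yr yL yR)
    · exact IHyl i
  · rintro (j | j)
    · exact IHxr j (mk yl yr yL yR)
    · exact IHyr j

theorem pg_add_assoc_equiv (x y z : PGame.{u}) :
    x + y + z ≤ x + (y + z) ∧ x + (y + z) ≤ x + y + z := by
  induction x using moveRecOn generalizing y z with
  | _ x IHxl IHxr =>
  induction y using moveRecOn generalizing z with
  | _ y IHyl IHyr =>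
  induction z using moveRecOn with
  | _ z IHzl IHzr =>
  obtain ⟨xl, xr, xL, xR⟩ := x
  obtain ⟨yl, yr, yL, yR⟩ := y
  obtain ⟨zl, zr, zL, zR⟩ := z
  refine pg_equiv_of_moves (Equiv.sumAssoc _ _ _) (Equiv.sumAssoc _ _ _) ?_ ?_
  · rintro ((i | i) | i)
    · exact IHxl i (mk yl yr yL yR) (mk zl zr zL zR)
    · exact IHyl i (mk zl zr zL zR)
    · exact IHzl i
  · rintro ((j | j) | j)
    · exact IHxr j (mk yl yr yL yR) (mk zl zr zL zR)
    · exact IHyr j (mk zl zr zL zR)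
    · exact IHzr j

theorem add_zero_equiv (x : PGame.{u}) : x + 0 ≤ x ∧ x ≤ x + 0 := by
  induction x using moveRecOn with
  | _ x IHl IHr =>
  obtain ⟨xl, xr, xL, xR⟩ := x
  refine pg_equiv_of_moves (Equiv.sumEmpty xl PEmpty) (Equiv.sumEmpty xr PEmpty) ?_ ?_
  · rintro (i | i)
    · exact IHl i
    · exact PEmpty.elim i
  · rintro (j | j)
    · exact IHr j
    · exact PEmpty.elim j

theorem zero_add_equiv (x : PGame.{u}) : 0 + x ≤ x ∧ x ≤ 0 + x :=
  ⟨le_trans (pg_add_comm_equiv 0 x).1 (add_zero_equiv x).1,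
    le_trans (add_zero_equiv x).2 (pg_add_comm_equiv x 0).1⟩

theorem pg_neg_add_cancel_equiv (x : PGame.{u}) : -x + x ≤ 0 ∧ 0 ≤ -x + x := by
  induction x using moveRecOn with
  | _ x IHl IHr =>
  obtain ⟨xl, xr, xL, xR⟩ := x
  constructor
  · rw [PGame.le_zero_lf]
    rintro (i | i)
    · exact add_lf_of_moveRight_inr_le (x := -xR i) (y := mk xl xr xL xR) (w := 0) i (IHr i).1
    · exact add_lf_of_moveRight_inl_le (x := -(mk xl xr xL xR)) (y := xL i) (w := 0) i (IHl i).1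
  · rw [PGame.zero_le_lf]
    rintro (j | j)
    · exact lf_add_of_le_moveLeft_inr (x := -xL j) (y := mk xl xr xL xR) (w := 0) j (IHl j).2
    · exact lf_add_of_le_moveLeft_inl (x := -(mk xl xr xL xR)) (y := xR j) (w := 0) j (IHr j).2

theorem pg_add_le_add_right {x y : PGame.{u}} (h : x ≤ y) (z : PGame.{u}) : x + z ≤ y + z :=
  (pg_add_le_lf_add_right x y z).1 h

theorem pg_add_le_add_left {x y : PGame.{u}} (h : x ≤ y) (z : PGame.{u}) : z + x ≤ z + y :=
  le_trans (pg_add_comm_equiv z x).1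
    (le_trans (pg_add_le_add_right h z) (pg_add_comm_equiv y z).1)

instance setoid : Setoid PGame.{u} :=
  ⟨fun x y => x ≤ y ∧ y ≤ x,
    ⟨fun _ => ⟨le_rfl, le_rfl⟩, fun h => ⟨h.2, h.1⟩,
      fun h1 h2 => ⟨le_trans h1.1 h2.1, le_trans h2.2 h1.2⟩⟩⟩

theorem pg_add_congr {a₁ a₂ : PGame.{u}} (ha : a₁ ≈ a₂) {b₁ b₂ : PGame.{u}} (hb : b₁ ≈ b₂) :
    a₁ + b₁ ≈ a₂ + b₂ := by
  obtain ⟨h1, h2⟩ := ha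
  obtain ⟨k1, k2⟩ := hb
  exact ⟨le_trans (pg_add_le_add_right h1 _) (pg_add_le_add_left k1 _),
    le_trans (pg_add_le_add_right h2 _) (pg_add_le_add_left k2 _)⟩

theorem pg_neg_congr {a₁ a₂ : PGame.{u}} (ha : a₁ ≈ a₂) : -a₁ ≈ -a₂ := by
  obtain ⟨h1, h2⟩ := ha
  exact ⟨(pg_neg_le_lf_neg_iff a₂ a₁).1.2 h2, (pg_neg_le_lf_neg_iff a₁ a₂).1.2 h1⟩

theorem pg_le_congr {a₁ b₁ a₂ b₂ : PGame.{u}} (ha : a₁ ≈ a₂) (hb : b₁ ≈ b₂) :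
    (a₁ ≤ b₁) = (a₂ ≤ b₂) := by
  obtain ⟨h1, h2⟩ := ha
  obtain ⟨k1, k2⟩ := hb
  exact propext ⟨fun h => le_trans h2 (le_trans h k1), fun h => le_trans h1 (le_trans h k2)⟩

inductive Relabelling : PGame.{u} → PGame.{u} → Type (u + 1)
  | mk : ∀ {x y : PGame.{u}} (L : x.LeftMoves ≃ y.LeftMoves) (R : x.RightMoves ≃ y.RightMoves),
      (∀ i, Relabelling (x.moveLeft i) (y.moveLeft (L i))) →
        (∀ j, Relabelling (x.moveRight j) (y.moveRight (R j))) → Relabelling x y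

infixl:50 " ≡r " => Relabelling

def addZeroRelabelling : ∀ x : PGame.{u}, x + 0 ≡r x
  | mk xl xr xL xR =>
    Relabelling.mk (Equiv.sumEmpty xl PEmpty) (Equiv.sumEmpty xr PEmpty)
      (fun i => match i with
        | Sum.inl i => addZeroRelabelling (xL i)
        | Sum.inr e => PEmpty.elim e)
      (fun j => match j with
        | Sum.inl j => addZeroRelabelling (xR j)
        | Sum.inr e => PEmpty.elim e)

noncomputable def birthday : PGame.{u} → Ordinal.{u}
  | mk _ _ xL xR => max (⨆ i, Order.succ (birthday (xL i))) (⨆ j, Order.succ (birthday (xR j)))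

theorem birthday_moveLeft_lt {x : PGame.{u}} (i : x.LeftMoves) :
    (x.moveLeft i).birthday < x.birthday := by
  cases x with
  | mk xl xr xL xR =>
    rw [birthday]
    exact lt_of_lt_of_le (Order.lt_succ _)
      (le_max_of_le_left (le_ciSup (Ordinal.bddAbove_range.{u, u} _) i))

theorem birthday_neg (x : PGame.{u}) : (-x).birthday = x.birthday := by
  induction x using moveRecOn with
  | _ x ihL ihR =>
    obtain ⟨xl, xr, xL, xR⟩ := x
    show birthday (mk xr xl (fun j => -(xR j)) (fun i => -(xL i))) = birthday (mk xl xr xL xR)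
    rw [birthday, birthday, max_comm]
    exact congrArg₂ max (iSup_congr fun i => congrArg Order.succ (ihL i))
      (iSup_congr fun j => congrArg Order.succ (ihR j))

end PGame

abbrev Game : Type (u + 1) := Quotient PGame.setoid.{u}

namespace Game

instance : Zero Game.{u} := ⟨⟦0⟧⟩

instance : Add Game.{u} := ⟨Quotient.map₂ (· + ·) @PGame.pg_add_congr⟩

instance : Neg Game.{u} := ⟨Quotient.map (fun x => -x) @PGame.pg_neg_congr⟩

def le' : Game.{u} → Game.{u} → Prop :=
  Quotient.lift₂ (· ≤ ·) fun _ _ _ _ ha hb => PGame.pg_le_congr ha hb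

instance : PartialOrder Game.{u} where
  le := le'
  lt := fun a b => le' a b ∧ ¬ le' b a
  lt_iff_le_not_ge := fun _ _ => Iff.rfl
  le_refl := by rintro ⟨x⟩; exact le_refl x
  le_trans := by
    rintro ⟨x⟩ ⟨y⟩ ⟨z⟩
    show x ≤ y → y ≤ z → x ≤ z
    exact le_trans
  le_antisymm := by
    rintro ⟨x⟩ ⟨y⟩ h1 h2
    exact Quotient.sound ⟨h1, h2⟩

instance instPreorderGame : Preorder Game.{u} := PartialOrder.toPreorder

instance instLEGame : LE Game.{u} := Preorder.toLE

instance instLTGame : LT Game.{u} := Preorder.toLT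

instance : AddCommGroup Game.{u} where
  add := (· + ·)
  zero := 0
  neg := Neg.neg
  add_assoc := by
    rintro ⟨x⟩ ⟨y⟩ ⟨z⟩; exact Quotient.sound (PGame.pg_add_assoc_equiv x y z)
  zero_add := by rintro ⟨x⟩; exact Quotient.sound (PGame.zero_add_equiv x)
  add_zero := by rintro ⟨x⟩; exact Quotient.sound (PGame.add_zero_equiv x)
  add_comm := by rintro ⟨x⟩ ⟨y⟩; exact Quotient.sound (PGame.pg_add_comm_equiv x y)
  neg_add_cancel := by rintro ⟨x⟩; exact Quotient.sound (PGame.pg_neg_add_cancel_equiv x)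
  nsmul := nsmulRec
  zsmul := zsmulRec

instance : IsOrderedAddMonoid Game.{u} where
  add_le_add_left := by
    rintro ⟨a⟩ ⟨b⟩ h ⟨c⟩
    exact PGame.pg_add_le_add_right (x := a) (y := b) (z := c) h

end Game

namespace PGame

theorem quot_add (a b : PGame.{u}) : (⟦a + b⟧ : Game) = ⟦a⟧ + ⟦b⟧ := rfl

theorem quot_zero : (⟦0⟧ : Game.{u}) = 0 := rfl

theorem quot_neg (a : PGame.{u}) : (⟦-a⟧ : Game) = -⟦a⟧ := rfl

theorem le_iff_game_le {x y : PGame.{u}} : x ≤ y ↔ (⟦x⟧ : Game) ≤ ⟦y⟧ := Iff.rfl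

end PGame

end SetTheory

namespace Sprigs

open PGame

/-! ### Generic lemmas about `mw` and `nw` -/

theorem mw1_iff (x : PG) :
    (mw x).1 ↔ (IsEmpty x.LeftMoves ∨ ∃ i, ¬ (mw (x.moveLeft i)).2) := by
  cases x with
  | mk α β L R => rw [mw]; exact Iff.rfl

theorem mw2_iff (x : PG) :
    (mw x).2 ↔ (IsEmpty x.RightMoves ∨ ∃ j, ¬ (mw (x.moveRight j)).1) := by
  cases x with
  | mk α β L R => rw [mw]; exact Iff.rfl

theorem nw1_iff (x : PG) : (nw x).1 ↔ ∃ i, ¬ (nw (x.moveLeft i)).2 := by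
  cases x with
  | mk α β L R => rw [nw]; exact Iff.rfl

theorem nw2_iff (x : PG) : (nw x).2 ↔ ∃ j, ¬ (nw (x.moveRight j)).1 := by
  cases x with
  | mk α β L R => rw [nw]; exact Iff.rfl

theorem mw_neg (x : PG) : ((mw (-x)).1 ↔ (mw x).2) ∧ ((mw (-x)).2 ↔ (mw x).1) := by
  induction x using PGame.moveRecOn with
  | _ x ihL ihR =>
    cases x with
    | mk α β L R =>
      constructor
      · rw [mw1_iff, mw2_iff]
        exact or_congr Iff.rfl (exists_congr fun j => not_congr (ihR j).2)
      · rw [mw2_iff, mw1_iff]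
        exact or_congr Iff.rfl (exists_congr fun i => not_congr (ihL i).1)

theorem mw_relabelling : ∀ {x y : PG}, x ≡r y → ((mw x).1 ↔ (mw y).1) ∧ ((mw x).2 ↔ (mw y).2)
  | x, y, r => by
    cases r with
    | mk eL eR hL hR =>
      constructor
      · rw [mw1_iff, mw1_iff]
        refine or_congr eL.isEmpty_congr ?_
        constructor
        · rintro ⟨i, hi⟩
          exact ⟨eL i, fun h => hi (((mw_relabelling (hL i)).2).2 h)⟩
        · rintro ⟨i, hi⟩
          refine ⟨eL.symm i, fun h => hi ?_⟩
          have := (mw_relabelling (hL (eL.symm i))).2.1 h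
          rwa [eL.apply_symm_apply] at this
      · rw [mw2_iff, mw2_iff]
        refine or_congr eR.isEmpty_congr ?_
        constructor
        · rintro ⟨j, hj⟩
          exact ⟨eR j, fun h => hj (((mw_relabelling (hR j)).1).2 h)⟩
        · rintro ⟨j, hj⟩
          refine ⟨eR.symm j, fun h => hj ?_⟩
          have := (mw_relabelling (hR (eR.symm j))).1.1 h
          rwa [eR.apply_symm_apply] at this
termination_by x => x
decreasing_by
  · subst_vars; exact Subsequent.moveLeft _ _
  · subst_vars; exact Subsequent.moveLeft _ _
  · subst_vars; exact Subsequent.moveRight _ _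
  · subst_vars; exact Subsequent.moveRight _ _

theorem mw_add_zero (x : PG) : ((mw (x + 0)).1 ↔ (mw x).1) ∧ ((mw (x + 0)).2 ↔ (mw x).2) :=
  mw_relabelling (PGame.addZeroRelabelling x)

theorem nw_iff (x : PG) : ((nw x).1 ↔ 0 ⧏ x) ∧ ((nw x).2 ↔ x ⧏ 0) := by
  induction x using PGame.moveRecOn with
  | _ x ihL ihR =>
    constructor
    · rw [nw1_iff, zero_lf_le]
      exact exists_congr fun i => by rw [(ihL i).2, PGame.not_lf]
    · rw [nw2_iff, lf_zero_le]
      exact exists_congr fun j => by rw [(ihR j).1, PGame.not_lf]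

/-! ### Move helpers -/

theorem exists_leftMoves_add' (x y : PG) (p : PGame → Prop) :
    (∃ i, p ((x + y).moveLeft i)) ↔
      (∃ i, p (x.moveLeft i + y)) ∨ (∃ j, p (x + y.moveLeft j)) := by
  cases x with
  | mk α β L R =>
    cases y with
    | mk γ δ L' R' =>
      constructor
      · rintro ⟨(i | j), h⟩
        · exact Or.inl ⟨i, h⟩
        · exact Or.inr ⟨j, h⟩
      · rintro (⟨i, h⟩ | ⟨j, h⟩)
        · exact ⟨Sum.inl i, h⟩
        · exact ⟨Sum.inr j, h⟩

theorem forall_rightMoves_add' (x y : PG) (p : PGame → Prop) :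
    (∀ j, p ((x + y).moveRight j)) ↔
      (∀ j, p (x.moveRight j + y)) ∧ (∀ j, p (x + y.moveRight j)) := by
  cases x with
  | mk α β L R =>
    cases y with
    | mk γ δ L' R' =>
      constructor
      · exact fun h => ⟨fun j => h (Sum.inl j), fun j => h (Sum.inr j)⟩
      · rintro ⟨h1, h2⟩ (j | j)
        · exact h1 j
        · exact h2 j

theorem exists_rightMoves_add' (x y : PG) (p : PGame → Prop) :
    (∃ j, p ((x + y).moveRight j)) ↔
      (∃ j, p (x.moveRight j + y)) ∨ (∃ j, p (x + y.moveRight j)) := by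
  cases x with
  | mk α β L R =>
    cases y with
    | mk γ δ L' R' =>
      constructor
      · rintro ⟨(i | j), h⟩
        · exact Or.inl ⟨i, h⟩
        · exact Or.inr ⟨j, h⟩
      · rintro (⟨i, h⟩ | ⟨j, h⟩)
        · exact ⟨Sum.inl i, h⟩
        · exact ⟨Sum.inr j, h⟩

theorem forall_leftMoves_add' (x y : PG) (p : PGame → Prop) :
    (∀ i, p ((x + y).moveLeft i)) ↔
      (∀ i, p (x.moveLeft i + y)) ∧ (∀ j, p (x + y.moveLeft j)) := by
  cases x with
  | mk α β L R =>
    cases y with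
    | mk γ δ L' R' =>
      constructor
      · exact fun h => ⟨fun j => h (Sum.inl j), fun j => h (Sum.inr j)⟩
      · rintro ⟨h1, h2⟩ (j | j)
        · exact h1 j
        · exact h2 j

theorem exists_leftMoves_sp (d : PGame.{0}) (p : PGame → Prop) :
    (∃ i, p ((ordSum PGame.star d).moveLeft i)) ↔
      (p 0 ∨ ∃ i, p (ordSum PGame.star (d.moveLeft i))) := by
  cases d with
  | mk γ δ L R =>
    rw [ordSum]
    constructor
    · rintro ⟨(u | i), h⟩
      · exact Or.inl h
      · exact Or.inr ⟨i, h⟩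
    · rintro (h | ⟨i, h⟩)
      · exact ⟨Sum.inl PUnit.unit, h⟩
      · exact ⟨Sum.inr i, h⟩

theorem exists_rightMoves_sp (d : PGame.{0}) (p : PGame → Prop) :
    (∃ j, p ((ordSum PGame.star d).moveRight j)) ↔
      (p 0 ∨ ∃ j, p (ordSum PGame.star (d.moveRight j))) := by
  cases d with
  | mk γ δ L R =>
    rw [ordSum]
    constructor
    · rintro ⟨(u | j), h⟩
      · exact Or.inl h
      · exact Or.inr ⟨j, h⟩
    · rintro (h | ⟨j, h⟩)
      · exact ⟨Sum.inl PUnit.unit, h⟩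
      · exact ⟨Sum.inr j, h⟩

theorem forall_leftMoves_sp (d : PGame.{0}) (p : PGame → Prop) :
    (∀ i, p ((ordSum PGame.star d).moveLeft i)) ↔
      (p 0 ∧ ∀ i, p (ordSum PGame.star (d.moveLeft i))) := by
  cases d with
  | mk γ δ L R =>
    rw [ordSum]
    constructor
    · exact fun h => ⟨h (Sum.inl PUnit.unit), fun i => h (Sum.inr i)⟩
    · rintro ⟨h0, h1⟩ (u | i)
      · exact h0
      · exact h1 i

theorem forall_rightMoves_sp (d : PGame.{0}) (p : PGame → Prop) :
    (∀ j, p ((ordSum PGame.star d).moveRight j)) ↔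
      (p 0 ∧ ∀ j, p (ordSum PGame.star (d.moveRight j))) := by
  cases d with
  | mk γ δ L R =>
    rw [ordSum]
    constructor
    · exact fun h => ⟨h (Sum.inl PUnit.unit), fun j => h (Sum.inr j)⟩
    · rintro ⟨h0, h1⟩ (u | j)
      · exact h0
      · exact h1 j

theorem forall_leftMoves_star (p : PGame → Prop) :
    (∀ i, p (PGame.star.moveLeft i)) ↔ p 0 :=
  ⟨fun h => h PUnit.unit, fun h _ => h⟩

theorem forall_rightMoves_star (p : PGame → Prop) :
    (∀ j, p (PGame.star.moveRight j)) ↔ p 0 :=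
  ⟨fun h => h PUnit.unit, fun h _ => h⟩

theorem exists_leftMoves_star (p : PGame → Prop) :
    (∃ i, p (PGame.star.moveLeft i)) ↔ p 0 :=
  ⟨fun ⟨_, h⟩ => h, fun h => ⟨PUnit.unit, h⟩⟩

theorem exists_rightMoves_star (p : PGame → Prop) :
    (∃ j, p (PGame.star.moveRight j)) ↔ p 0 :=
  ⟨fun ⟨_, h⟩ => h, fun h => ⟨PUnit.unit, h⟩⟩

theorem neg_add_eq' : ∀ (x y : PG), -(x + y) = -x + -y
  | PGame.mk α β L R, PGame.mk γ δ L' R' => by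
    show PGame.mk _ _ _ _ = PGame.mk _ _ _ _
    congr 1
    · funext j
      cases j with
      | inl j => exact neg_add_eq' (R j) (PGame.mk γ δ L' R')
      | inr j => exact neg_add_eq' (PGame.mk α β L R) (R' j)
    · funext i
      cases i with
      | inl i => exact neg_add_eq' (L i) (PGame.mk γ δ L' R')
      | inr i => exact neg_add_eq' (PGame.mk α β L R) (L' i)
termination_by x y => (x, y)
decreasing_by
  · exact Prod.Lex.left _ _ (Subsequent.mk_right _ _ _)
  · exact Prod.Lex.right _ (Subsequent.mk_right _ _ _)
  · exact Prod.Lex.left _ _ (Subsequent.mk_left _ _ _)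
  · exact Prod.Lex.right _ (Subsequent.mk_left _ _ _)

theorem neg_sp : ∀ (d : PGame.{0}), -(ordSum PGame.star d) = ordSum PGame.star (-d)
  | PGame.mk γ δ L R => by
    simp only [ordSum, PGame.neg_def]
    congr 1
    · funext j
      cases j with
      | inl u => exact neg_zero
      | inr j => exact neg_sp (R j)
    · funext i
      cases i with
      | inl u => exact neg_zero
      | inr i => exact neg_sp (L i)
termination_by d => d
decreasing_by
  · exact Subsequent.mk_right _ _ _
  · exact Subsequent.mk_left _ _ _

/-! ### Nice numbers -/

inductive Nice : PGame.{0} → Prop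
  | intro (x : PGame.{0})
      (hL : ∀ i, Nice (x.moveLeft i)) (hR : ∀ j, Nice (x.moveRight j))
      (h1 : 0 ≤ x ∨ x ≤ 0)
      (h2 : 0 < x → ∃ i, 0 ≤ x.moveLeft i)
      (h2' : x < 0 → ∃ j, x.moveRight j ≤ 0)
      (h3 : 0 ≤ x → ∀ j, 0 < x.moveRight j)
      (h3' : x ≤ 0 → ∀ i, x.moveLeft i < 0) : Nice x

theorem Nice.moveLeft {x : PG} (h : Nice x) (i) : Nice (x.moveLeft i) := by
  cases h with | intro x hL hR h1 h2 h2' h3 h3' => exact hL i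

theorem Nice.moveRight {x : PG} (h : Nice x) (j) : Nice (x.moveRight j) := by
  cases h with | intro x hL hR h1 h2 h2' h3 h3' => exact hR j

theorem Nice.total {x : PG} (h : Nice x) : 0 ≤ x ∨ x ≤ 0 := by
  cases h with | intro x hL hR h1 h2 h2' h3 h3' => exact h1

theorem Nice.exists_left {x : PG} (h : Nice x) : 0 < x → ∃ i, 0 ≤ x.moveLeft i := by
  cases h with | intro x hL hR h1 h2 h2' h3 h3' => exact h2

theorem Nice.exists_right {x : PG} (h : Nice x) : x < 0 → ∃ j, x.moveRight j ≤ 0 := by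
  cases h with | intro x hL hR h1 h2 h2' h3 h3' => exact h2'

theorem Nice.right_pos {x : PG} (h : Nice x) : 0 ≤ x → ∀ j, 0 < x.moveRight j := by
  cases h with | intro x hL hR h1 h2 h2' h3 h3' => exact h3

theorem Nice.left_neg {x : PG} (h : Nice x) : x ≤ 0 → ∀ i, x.moveLeft i < 0 := by
  cases h with | intro x hL hR h1 h2 h2' h3 h3' => exact h3'

theorem Nice.neg : ∀ {x : PG}, Nice x → Nice (-x) := by
  intro x h
  induction h with
  | intro x hL hR h1 h2 h2' h3 h3' ihL ihR =>
    obtain ⟨α, β, L, R⟩ := x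
    refine Nice.intro _ (fun j => ihR j) (fun i => ihL i) ?_ ?_ ?_ ?_ ?_
    · rcases h1 with h | h
      · exact Or.inr (PGame.neg_le_zero_iff.2 h)
      · exact Or.inl (PGame.zero_le_neg_iff.2 h)
    · intro hpos
      obtain ⟨j, hj⟩ := h2' (PGame.zero_lt_neg_iff.1 hpos)
      exact ⟨j, PGame.zero_le_neg_iff.2 hj⟩
    · intro hneg
      obtain ⟨i, hi⟩ := h2 (PGame.neg_lt_zero_iff.1 hneg)
      exact ⟨i, PGame.neg_le_zero_iff.2 hi⟩
    · intro hpos i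
      exact PGame.zero_lt_neg_iff.2 (h3' (PGame.zero_le_neg_iff.1 hpos) i)
    · intro hneg j
      exact PGame.neg_lt_zero_iff.2 (h3 (PGame.neg_le_zero_iff.1 hneg) j)

theorem natGame_nonneg : ∀ k, 0 ≤ natGame k := by
  intro k
  cases k with
  | zero => rw [natGame]; exact le_rfl
  | succ n =>
    rw [natGame, PGame.zero_le_lf]
    exact fun j => j.elim

theorem natGame_pos (k : ℕ) : 0 < natGame (k + 1) := by
  refine PGame.lt_iff_le_and_lf.2 ⟨natGame_nonneg _, ?_⟩
  rw [natGame, PGame.zero_lf_le]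
  exact ⟨PUnit.unit, natGame_nonneg k⟩

theorem intGame_sign (m : ℤ) :
    (0 ≤ m → 0 ≤ intGame m) ∧ (0 < m → 0 < intGame m) ∧
      (m ≤ 0 → intGame m ≤ 0) ∧ (m < 0 → intGame m < 0) := by
  rw [intGame]
  by_cases h : 0 ≤ m
  · rw [if_pos h]
    refine ⟨fun _ => natGame_nonneg _, fun hm => ?_, fun hm => ?_, fun hm => ?_⟩
    · obtain ⟨k, hk⟩ : ∃ k, m.toNat = k + 1 := ⟨m.toNat - 1, by omega⟩
      rw [hk]; exact natGame_pos k
    · have : m = 0 := le_antisymm hm h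
      subst this
      exact le_rfl
    · omega
  · rw [if_neg h]
    have hm : 0 < -m := by omega
    obtain ⟨k, hk⟩ : ∃ k, (-m).toNat = k + 1 := ⟨(-m).toNat - 1, by omega⟩
    rw [hk]
    refine ⟨fun h0 => absurd h0 (by omega), fun h0 => absurd h0 (by omega), fun _ => ?_, fun _ => ?_⟩
    · exact PGame.neg_le_zero_iff.2 (natGame_nonneg _)
    · exact PGame.neg_lt_zero_iff.2 (natGame_pos _)

theorem dGame_sign : ∀ (n : ℕ) (m : ℤ),
    (0 ≤ m → 0 ≤ dGame n m) ∧ (0 < m → 0 < dGame n m) ∧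
      (m ≤ 0 → dGame n m ≤ 0) ∧ (m < 0 → dGame n m < 0) := by
  intro n
  induction n with
  | zero => intro m; rw [dGame]; exact intGame_sign m
  | succ n ih =>
    intro m
    rw [dGame]
    by_cases h : m % 2 = 0
    · rw [if_pos h]
      obtain ⟨h1, h2, h3, h4⟩ := ih (m / 2)
      exact ⟨fun hm => h1 (by omega), fun hm => h2 (by omega),
        fun hm => h3 (by omega), fun hm => h4 (by omega)⟩
    · rw [if_neg h]
      rcases lt_or_ge 0 m with hm | hm
      · have ha : 0 ≤ (m - 1) / 2 := by omega
        have hb : 0 < (m + 1) / 2 := by omega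
        have hle : 0 ≤ PGame.mk PUnit PUnit (fun _ => dGame n ((m - 1) / 2))
            (fun _ => dGame n ((m + 1) / 2)) := by
          rw [PGame.zero_le_lf]
          exact fun _ => PGame.lf_of_lt ((ih _).2.1 hb)
        have hlf : (0 : PGame) ⧏ PGame.mk PUnit PUnit (fun _ => dGame n ((m - 1) / 2))
            (fun _ => dGame n ((m + 1) / 2)) := by
          rw [PGame.zero_lf_le]
          exact ⟨PUnit.unit, (ih _).1 ha⟩
        exact ⟨fun _ => hle, fun _ => PGame.lt_iff_le_and_lf.2 ⟨hle, hlf⟩,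
          fun h0 => absurd h0 (by omega), fun h0 => absurd h0 (by omega)⟩
      · have hm' : m < 0 := by omega
        have ha : (m - 1) / 2 < 0 := by omega
        have hb : (m + 1) / 2 ≤ 0 := by omega
        have hle : PGame.mk PUnit PUnit (fun _ => dGame n ((m - 1) / 2))
            (fun _ => dGame n ((m + 1) / 2)) ≤ 0 := by
          rw [PGame.le_zero_lf]
          exact fun _ => PGame.lf_of_lt ((ih _).2.2.2 ha)
        have hlf : PGame.mk PUnit PUnit (fun _ => dGame n ((m - 1) / 2))
            (fun _ => dGame n ((m + 1) / 2)) ⧏ 0 := by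
          rw [PGame.lf_zero_le]
          exact ⟨PUnit.unit, (ih _).2.2.1 hb⟩
        exact ⟨fun h0 => absurd h0 (by omega), fun h0 => absurd h0 (by omega),
          fun _ => hle, fun _ => PGame.lt_iff_le_and_lf.2 ⟨hle, hlf⟩⟩

theorem Nice_natGame : ∀ k, Nice (natGame k) := by
  intro k
  induction k with
  | zero =>
    rw [natGame]
    refine Nice.intro _ (fun i => i.elim) (fun j => j.elim) (Or.inl le_rfl) ?_ ?_
      (fun _ j => j.elim) (fun _ i => i.elim)
    · exact fun h => absurd h (lt_irrefl _)
    · exact fun h => absurd h (lt_irrefl _)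
  | succ k ih =>
    rw [natGame]
    refine Nice.intro _ (fun _ => ih) (fun j => j.elim) (Or.inl (natGame_nonneg (k + 1)))
      (fun _ => ⟨PUnit.unit, natGame_nonneg k⟩) ?_ (fun _ j => j.elim) ?_
    · intro h
      exact absurd (lt_of_le_of_lt (natGame_nonneg (k + 1)) h) (lt_irrefl _)
    · intro h
      exact absurd (lt_of_lt_of_le (natGame_pos k) h) (lt_irrefl _)

theorem Nice_intGame (m : ℤ) : Nice (intGame m) := by
  rw [intGame]
  by_cases h : 0 ≤ m
  · rw [if_pos h]; exact Nice_natGame _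
  · rw [if_neg h]; exact (Nice_natGame _).neg

theorem Nice_dGame : ∀ (n : ℕ) (m : ℤ), Nice (dGame n m) := by
  intro n
  induction n with
  | zero => intro m; rw [dGame]; exact Nice_intGame m
  | succ n ih =>
    intro m
    have hs := dGame_sign (n + 1) m
    rw [dGame] at hs ⊢
    by_cases h : m % 2 = 0
    · rw [if_pos h] at hs ⊢
      exact ih _
    · rw [if_neg h] at hs ⊢
      rcases lt_or_ge 0 m with hm | hm
      · refine Nice.intro _ (fun _ => ih _) (fun _ => ih _) (Or.inl (hs.1 (by omega)))
          (fun _ => ⟨PUnit.unit, (dGame_sign n _).1 (by omega)⟩) ?_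
          (fun _ _ => (dGame_sign n _).2.1 (by omega)) ?_
        · intro hlt
          exact absurd (lt_of_le_of_lt (hs.1 (by omega)) hlt) (lt_irrefl _)
        · intro hle
          exact absurd (lt_of_lt_of_le (hs.2.1 (by omega)) hle) (lt_irrefl _)
      · have hm' : m < 0 := by omega
        refine Nice.intro _ (fun _ => ih _) (fun _ => ih _) (Or.inr (hs.2.2.1 (by omega)))
          ?_ (fun _ => ⟨PUnit.unit, (dGame_sign n _).2.2.1 (by omega)⟩) ?_
          (fun _ _ => (dGame_sign n _).2.2.2 (by omega))
        · intro hlt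
          exact absurd (lt_of_lt_of_le hlt (hs.2.2.1 (by omega))) (lt_irrefl _)
        · intro hge
          exact absurd (lt_of_le_of_lt hge (hs.2.2.2 (by omega))) (lt_irrefl _)

theorem Nice_qGame (q : ℚ) : Nice (qGame q) := Nice_dGame _ _

/-! ### Order facts about sprigs -/

theorem zero_lf_sp (d : PGame.{0}) : 0 ⧏ ordSum PGame.star d :=
  PGame.zero_lf_le.2 ((exists_leftMoves_sp d (fun z => 0 ≤ z)).2 (Or.inl le_rfl))

theorem sp_lf_zero (d : PGame.{0}) : ordSum PGame.star d ⧏ 0 :=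
  PGame.lf_zero_le.2 ((exists_rightMoves_sp d (fun z => z ≤ 0)).2 (Or.inl le_rfl))

theorem sp_star_nonneg (d : PGame.{0}) (hd : Nice d) (h0 : 0 ≤ d) :
    0 ≤ ordSum PGame.star d + PGame.star := by
  rw [PGame.zero_le_lf]
  refine (forall_rightMoves_add' _ _ (fun z => 0 ⧏ z)).2 ⟨?_, ?_⟩
  · refine (forall_rightMoves_sp d (fun z => 0 ⧏ z + PGame.star)).2 ⟨?_, ?_⟩
    · refine PGame.zero_lf_le.2 ((exists_leftMoves_add' _ _ (fun z => 0 ≤ z)).2 (Or.inr ?_))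
      exact ⟨PUnit.unit, (PGame.zero_add_equiv 0).2⟩
    · intro j
      have hj : 0 < d.moveRight j := hd.right_pos h0 j
      obtain ⟨a, ha⟩ := (hd.moveRight j).exists_left hj
      refine PGame.zero_lf_le.2 ((exists_leftMoves_add' _ _ (fun z => 0 ≤ z)).2 (Or.inl ?_))
      refine (exists_leftMoves_sp _ (fun z => 0 ≤ z + PGame.star)).2 (Or.inr ?_)
      exact ⟨a, sp_star_nonneg _ ((hd.moveRight j).moveLeft a) ha⟩
  · refine (forall_rightMoves_star (fun z => 0 ⧏ ordSum PGame.star d + z)).2 ?_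
    refine PGame.zero_lf_le.2 ((exists_leftMoves_add' _ _ (fun z => 0 ≤ z)).2 (Or.inl ?_))
    refine (exists_leftMoves_sp _ (fun z => 0 ≤ z + 0)).2 (Or.inl ?_)
    exact (PGame.add_zero_equiv 0).2
termination_by d
decreasing_by exact Subsequent.moveRight_moveLeft _ _ _

theorem sp_sp_nonneg (d e : PGame.{0}) (hd : Nice d) (he : Nice e)
    (hd0 : 0 ≤ d) (he0 : 0 ≤ e) :
    0 ≤ ordSum PGame.star d + ordSum PGame.star e := by
  rw [PGame.zero_le_lf]
  refine (forall_rightMoves_add' _ _ (fun z => 0 ⧏ z)).2 ⟨?_, ?_⟩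
  · refine (forall_rightMoves_sp d (fun z => 0 ⧏ z + ordSum PGame.star e)).2 ⟨?_, ?_⟩
    · refine PGame.zero_lf_le.2 ((exists_leftMoves_add' _ _ (fun z => 0 ≤ z)).2 (Or.inr ?_))
      refine (exists_leftMoves_sp e (fun z => 0 ≤ 0 + z)).2 (Or.inl ?_)
      exact (PGame.zero_add_equiv 0).2
    · intro j
      have hj : 0 < d.moveRight j := hd.right_pos hd0 j
      obtain ⟨a, ha⟩ := (hd.moveRight j).exists_left hj
      refine PGame.zero_lf_le.2 ((exists_leftMoves_add' _ _ (fun z => 0 ≤ z)).2 (Or.inl ?_))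
      refine (exists_leftMoves_sp _ (fun z => 0 ≤ z + ordSum PGame.star e)).2 (Or.inr ?_)
      exact ⟨a, sp_sp_nonneg _ e ((hd.moveRight j).moveLeft a) he ha he0⟩
  · refine (forall_rightMoves_sp e (fun z => 0 ⧏ ordSum PGame.star d + z)).2 ⟨?_, ?_⟩
    · refine PGame.zero_lf_le.2 ((exists_leftMoves_add' _ _ (fun z => 0 ≤ z)).2 (Or.inl ?_))
      refine (exists_leftMoves_sp d (fun z => 0 ≤ z + 0)).2 (Or.inl ?_)
      exact (PGame.add_zero_equiv 0).2
    · intro j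
      have hj : 0 < e.moveRight j := he.right_pos he0 j
      obtain ⟨a, ha⟩ := (he.moveRight j).exists_left hj
      refine PGame.zero_lf_le.2 ((exists_leftMoves_add' _ _ (fun z => 0 ≤ z)).2 (Or.inr ?_))
      refine (exists_leftMoves_sp _ (fun z => 0 ≤ ordSum PGame.star d + z)).2 (Or.inr ?_)
      exact ⟨a, sp_sp_nonneg d _ hd ((he.moveRight j).moveLeft a) hd0 ha⟩
termination_by (d, e)
decreasing_by
  · exact Prod.Lex.left _ _ (Subsequent.moveRight_moveLeft _ _ _)
  · exact Prod.Lex.right _ (Subsequent.moveRight_moveLeft _ _ _)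

theorem quot_star_add_star : (⟦PGame.star⟧ : Game) + ⟦PGame.star⟧ = 0 := by
  conv_lhs => rw [show (⟦PGame.star⟧ : Game) + ⟦PGame.star⟧
    = ⟦PGame.star⟧ + ⟦-PGame.star⟧ by rw [PGame.neg_star]]
  rw [quot_neg, add_neg_cancel]

theorem sp_sp_star_nonneg (d e : PGame.{0}) (hd : Nice d) (he : Nice e)
    (hd0 : 0 < d) (he0 : 0 < e) :
    0 ≤ (ordSum PGame.star d + ordSum PGame.star e) + PGame.star := by
  rw [PGame.zero_le_lf]
  refine (forall_rightMoves_add' _ _ (fun z => 0 ⧏ z)).2 ⟨?_, ?_⟩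
  · refine (forall_rightMoves_add' _ _ (fun z => 0 ⧏ z + PGame.star)).2 ⟨?_, ?_⟩
    · refine (forall_rightMoves_sp d (fun z => 0 ⧏ (z + ordSum PGame.star e) + PGame.star)).2
        ⟨?_, ?_⟩
      · -- position (0 + sp e) + star, reply e → e^L
        obtain ⟨a, ha⟩ := he.exists_left he0
        refine PGame.zero_lf_le.2 ((exists_leftMoves_add' _ _ (fun z => 0 ≤ z)).2 (Or.inl ?_))
        refine (exists_leftMoves_add' _ _ (fun z => 0 ≤ z + PGame.star)).2 (Or.inr ?_)
        refine (exists_leftMoves_sp e (fun z => 0 ≤ (0 + z) + PGame.star)).2 (Or.inr ⟨a, ?_⟩)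
        refine PGame.le_iff_game_le.2 ?_
        have key := PGame.le_iff_game_le.1 (sp_star_nonneg _ (he.moveLeft a) ha)
        simp only [quot_add, quot_zero] at key ⊢
        simpa [zero_add] using key
      · -- position (sp dR j + sp e) + star, reply kill star
        intro j
        have hj : 0 < d.moveRight j := hd.right_pos hd0.le j
        refine PGame.zero_lf_le.2 ((exists_leftMoves_add' _ _ (fun z => 0 ≤ z)).2 (Or.inr ?_))
        refine (exists_leftMoves_star
          (fun z => 0 ≤ (ordSum PGame.star (d.moveRight j) + ordSum PGame.star e) + z)).2 ?_
        refine PGame.le_iff_game_le.2 ?_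
        have key := PGame.le_iff_game_le.1
          (sp_sp_nonneg _ e (hd.moveRight j) he hj.le he0.le)
        simp only [quot_add, quot_zero] at key ⊢
        simpa [add_zero] using key
    · refine (forall_rightMoves_sp e
        (fun z => 0 ⧏ (ordSum PGame.star d + z) + PGame.star)).2 ⟨?_, ?_⟩
      · -- position (sp d + 0) + star, reply d → d^L
        obtain ⟨a, ha⟩ := hd.exists_left hd0
        refine PGame.zero_lf_le.2 ((exists_leftMoves_add' _ _ (fun z => 0 ≤ z)).2 (Or.inl ?_))
        refine (exists_leftMoves_add' _ _ (fun z => 0 ≤ z + PGame.star)).2 (Or.inl ?_)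
        refine (exists_leftMoves_sp d (fun z => 0 ≤ (z + 0) + PGame.star)).2 (Or.inr ⟨a, ?_⟩)
        refine PGame.le_iff_game_le.2 ?_
        have key := PGame.le_iff_game_le.1 (sp_star_nonneg _ (hd.moveLeft a) ha)
        simp only [quot_add, quot_zero] at key ⊢
        simpa [add_zero] using key
      · -- position (sp d + sp eR j) + star, reply kill star
        intro j
        have hj : 0 < e.moveRight j := he.right_pos he0.le j
        refine PGame.zero_lf_le.2 ((exists_leftMoves_add' _ _ (fun z => 0 ≤ z)).2 (Or.inr ?_))
        refine (exists_leftMoves_star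
          (fun z => 0 ≤ (ordSum PGame.star d + ordSum PGame.star (e.moveRight j)) + z)).2 ?_
        refine PGame.le_iff_game_le.2 ?_
        have key := PGame.le_iff_game_le.1
          (sp_sp_nonneg d _ hd (he.moveRight j) hd0.le hj.le)
        simp only [quot_add, quot_zero] at key ⊢
        simpa [add_zero] using key
  · -- star killed: position (sp d + sp e) + 0, reply d → d^L
    refine (forall_rightMoves_star
      (fun z => 0 ⧏ (ordSum PGame.star d + ordSum PGame.star e) + z)).2 ?_
    obtain ⟨a, ha⟩ := hd.exists_left hd0
    refine PGame.zero_lf_le.2 ((exists_leftMoves_add' _ _ (fun z => 0 ≤ z)).2 (Or.inl ?_))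
    refine (exists_leftMoves_add' _ _ (fun z => 0 ≤ z + 0)).2 (Or.inl ?_)
    refine (exists_leftMoves_sp d (fun z => 0 ≤ (z + ordSum PGame.star e) + 0)).2 (Or.inr ⟨a, ?_⟩)
    refine PGame.le_iff_game_le.2 ?_
    have key := PGame.le_iff_game_le.1 (sp_sp_nonneg _ e (hd.moveLeft a) he ha he0.le)
    simp only [quot_add, quot_zero] at key ⊢
    simpa [add_zero] using key

theorem sp_star_nonpos (d : PGame.{0}) (hd : Nice d) (h0 : d ≤ 0) :
    ordSum PGame.star d + PGame.star ≤ 0 := by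
  have h := sp_star_nonneg (-d) hd.neg (PGame.zero_le_neg_iff.2 h0)
  rw [← neg_sp] at h
  have h' := PGame.le_iff_game_le.1 h
  refine PGame.le_iff_game_le.2 ?_
  simp only [quot_add, quot_zero, quot_neg] at h' ⊢
  calc ⟦ordSum PGame.star d⟧ + (⟦PGame.star⟧ : Game)
      ≤ (⟦ordSum PGame.star d⟧ + ⟦PGame.star⟧) + (-⟦ordSum PGame.star d⟧ + ⟦PGame.star⟧) :=
        le_add_of_nonneg_right h'
    _ = (⟦PGame.star⟧ + ⟦PGame.star⟧) +
        (⟦ordSum PGame.star d⟧ + -⟦ordSum PGame.star d⟧) := by abel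
    _ = 0 := by rw [quot_star_add_star, add_neg_cancel, add_zero]

/-! ### The class of sums of star-based numbers -/

inductive Item : PG → Prop
  | zero : Item 0
  | spr {d : PGame.{0}} (hd : Nice d) : Item (ordSum PGame.star d)

inductive Cl : PG → Prop
  | nil : Cl 0
  | cons {c G : PG} : Item c → Cl G → Cl (c + G)

theorem sp_kill_left (d : PGame.{0}) : ∃ i, (ordSum PGame.star d).moveLeft i = 0 := by
  cases d with
  | mk γ δ L R =>
    rw [ordSum]
    exact ⟨Sum.inl PUnit.unit, rfl⟩

theorem sp_kill_right (d : PGame.{0}) : ∃ j, (ordSum PGame.star d).moveRight j = 0 := by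
  cases d with
  | mk γ δ L R =>
    rw [ordSum]
    exact ⟨Sum.inl PUnit.unit, rfl⟩

theorem sp_left_move (d : PGame.{0}) (a : d.LeftMoves) :
    ∃ i, (ordSum PGame.star d).moveLeft i = ordSum PGame.star (d.moveLeft a) := by
  cases d with
  | mk γ δ L R =>
    rw [ordSum]
    exact ⟨Sum.inr a, rfl⟩

theorem Item.moveLeft {c : PG} (h : Item c) (i : c.LeftMoves) : Item (c.moveLeft i) := by
  cases h with
  | zero => exact i.elim
  | spr hd =>
    rename_i d
    cases d with
    | mk γ δ L R =>
      revert i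
      rw [ordSum]
      intro i
      cases i with
      | inl u => exact Item.zero
      | inr a => exact Item.spr (hd.moveLeft a)

theorem Item.neg {c : PG} (h : Item c) : Item (-c) := by
  cases h with
  | zero => rw [neg_zero]; exact Item.zero
  | spr hd => rw [neg_sp]; exact Item.spr hd.neg

theorem Cl.moveLeft : ∀ {G : PG}, Cl G → ∀ i, Cl (G.moveLeft i) := by
  intro G h
  induction h with
  | nil => exact fun i => i.elim
  | cons hc hG' ih =>
    intro i
    rename_i c G'
    refine PGame.leftMoves_add_cases i
      (P := fun k => Cl ((c + G').moveLeft k)) ?_ ?_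
    · intro i0
      rw [PGame.add_moveLeft_inl]
      exact Cl.cons (hc.moveLeft i0) hG'
    · intro j
      rw [PGame.add_moveLeft_inr]
      exact Cl.cons hc (ih j)

theorem Cl.neg : ∀ {G : PG}, Cl G → Cl (-G) := by
  intro G h
  induction h with
  | nil => rw [neg_zero]; exact Cl.nil
  | cons hc _ ih =>
    rw [neg_add_eq']
    exact Cl.cons hc.neg ih

/-! ### Positive-item decompositions -/

inductive PCl : PG → ℕ → Prop
  | nil : PCl 0 0
  | zero {G : PG} {n : ℕ} : PCl G n → PCl ((0 : PGame) + G) n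
  | pos {d : PGame.{0}} {G : PG} {n : ℕ} (hd : Nice d) (h0 : 0 < d) :
      PCl G n → PCl (ordSum PGame.star d + G) (n + 1)

theorem PCl.quot_eq_zero : ∀ {G : PG}, PCl G 0 → (⟦G⟧ : Game) = 0 := by
  intro G h
  generalize hn : (0 : ℕ) = n at h
  induction h with
  | nil => rfl
  | zero hG ih => rw [quot_add, quot_zero, zero_add]; exact ih hn
  | pos hd h0 hG ih => omega

theorem PCl.isEmpty : ∀ {G : PG}, PCl G 0 → IsEmpty G.LeftMoves := by
  intro G h
  generalize hn : (0 : ℕ) = n at h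
  induction h with
  | nil => exact PEmpty.instIsEmpty
  | zero hG ih =>
    haveI := ih hn
    exact PGame.isEmpty_leftMoves_add _ _
  | pos hd h0 hG ih => omega

theorem pcl_main : ∀ {G : PG} {n : ℕ}, PCl G n →
    (Even n → 0 ≤ (⟦G⟧ : Game)) ∧
    (Odd n → 0 ≤ (⟦G⟧ : Game) + ⟦PGame.star⟧) ∧
    (Odd n → ∀ (e : PGame.{0}), Nice e → 0 < e →
        0 ≤ ⟦ordSum PGame.star e⟧ + (⟦G⟧ : Game) + ⟦PGame.star⟧) ∧
    (Odd n → ∀ (e : PGame.{0}), Nice e → 0 ≤ e →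
        0 ≤ ⟦ordSum PGame.star e⟧ + (⟦G⟧ : Game)) := by
  intro G n h
  induction h with
  | nil =>
    refine ⟨fun _ => le_of_eq rfl, fun h => absurd h (by decide), fun h => absurd h (by decide),
      fun h => absurd h (by decide)⟩
  | zero hG ih =>
    simpa only [quot_add, quot_zero, zero_add] using ih
  | pos hd h0 hG ih =>
    rename_i d G' m
    obtain ⟨ih1, ih2, ih3, ih4⟩ := ih
    simp only [quot_add]
    constructor
    · intro he
      have hm : Odd m := by rcases he with ⟨k, hk⟩; exact ⟨k - 1, by omega⟩
      exact ih4 hm d hd h0.le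
    refine ⟨?_, ?_, ?_⟩
    · intro ho
      have hm : Even m := by rcases ho with ⟨k, hk⟩; exact ⟨k, by omega⟩
      have hb := PGame.le_iff_game_le.1 (sp_star_nonneg d hd h0.le)
      simp only [quot_add, quot_zero] at hb
      calc (0 : Game) ≤ (⟦ordSum PGame.star d⟧ + ⟦PGame.star⟧) + ⟦G'⟧ :=
            add_nonneg hb (ih1 hm)
        _ = ⟦ordSum PGame.star d⟧ + ⟦G'⟧ + ⟦PGame.star⟧ := by abel
    · intro ho e he he0
      have hm : Even m := by rcases ho with ⟨k, hk⟩; exact ⟨k, by omega⟩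
      have hc := PGame.le_iff_game_le.1 (sp_sp_star_nonneg e d he hd he0 h0)
      simp only [quot_add, quot_zero] at hc
      calc (0 : Game)
          ≤ ((⟦ordSum PGame.star e⟧ + ⟦ordSum PGame.star d⟧) + ⟦PGame.star⟧) + ⟦G'⟧ :=
            add_nonneg hc (ih1 hm)
        _ = ⟦ordSum PGame.star e⟧ + (⟦ordSum PGame.star d⟧ + ⟦G'⟧) + ⟦PGame.star⟧ := by abel
    · intro ho e he he0
      have hm : Even m := by rcases ho with ⟨k, hk⟩; exact ⟨k, by omega⟩
      have hb := PGame.le_iff_game_le.1 (sp_sp_nonneg e d he hd he0 h0.le)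
      simp only [quot_add, quot_zero] at hb
      calc (0 : Game)
          ≤ (⟦ordSum PGame.star e⟧ + ⟦ordSum PGame.star d⟧) + ⟦G'⟧ := add_nonneg hb (ih1 hm)
        _ = ⟦ordSum PGame.star e⟧ + (⟦ordSum PGame.star d⟧ + ⟦G'⟧) := by abel

theorem pcl_even_pos : ∀ {G : PG} {n : ℕ}, PCl G n → Even n → 2 ≤ n →
    0 ≤ (⟦G⟧ : Game) + ⟦PGame.star⟧ := by
  intro G n h
  induction h with
  | nil => omega
  | zero hG ih =>
    intro he h2
    simpa only [quot_add, quot_zero, zero_add] using ih he h2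
  | pos hd h0 hG ih =>
    rename_i d G' m
    intro he h2
    have hm : Odd m := by rcases he with ⟨k, hk⟩; exact ⟨k - 1, by omega⟩
    have := (pcl_main hG).2.2.1 hm d hd h0
    simp only [quot_add]
    calc (0 : Game) ≤ ⟦ordSum PGame.star d⟧ + ⟦G'⟧ + ⟦PGame.star⟧ := this
      _ = ⟦ordSum PGame.star d⟧ + ⟦G'⟧ + ⟦PGame.star⟧ := rfl

theorem kill_or_pos : ∀ {G : PG}, Cl G →
    (∃ i, (⟦G⟧ : Game) + ⟦PGame.star⟧ ≤ ⟦G.moveLeft i⟧) ∨ (∃ n, PCl G n) := by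
  intro G h
  induction h with
  | nil => exact Or.inr ⟨0, PCl.nil⟩
  | cons hc hG' ih =>
    rename_i c G'
    rcases ih with ⟨i, hi⟩ | ⟨n, hp⟩
    · refine Or.inl ⟨PGame.toLeftMovesAdd (Sum.inr i), ?_⟩
      rw [PGame.add_moveLeft_inr]
      calc (⟦c + G'⟧ : Game) + ⟦PGame.star⟧
          = ⟦c⟧ + (⟦G'⟧ + ⟦PGame.star⟧) := by simp only [quot_add]; abel
        _ ≤ ⟦c⟧ + ⟦G'.moveLeft i⟧ := add_le_add_right hi _
        _ = ⟦c + G'.moveLeft i⟧ := by simp only [quot_add]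
    · cases hc with
      | zero => exact Or.inr ⟨n, hp.zero⟩
      | spr hd =>
        rename_i d
        by_cases hneg : d ≤ 0
        · obtain ⟨i0, hi0⟩ := sp_kill_left d
          refine Or.inl ⟨PGame.toLeftMovesAdd (Sum.inl i0), ?_⟩
          rw [PGame.add_moveLeft_inl, hi0]
          have hb := PGame.le_iff_game_le.1 (sp_star_nonpos d hd hneg)
          simp only [quot_add, quot_zero] at hb
          calc (⟦ordSum PGame.star d + G'⟧ : Game) + ⟦PGame.star⟧
              = (⟦ordSum PGame.star d⟧ + ⟦PGame.star⟧) + ⟦G'⟧ := by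
                simp only [quot_add]; abel
            _ ≤ 0 + ⟦G'⟧ := add_le_add_left hb _
            _ = ⟦(0 : PGame) + G'⟧ := by simp only [quot_add, quot_zero]
        · have hd0 : 0 < d := PGame.lt_iff_le_and_lf.2
            ⟨hd.total.resolve_right hneg, PGame.not_le.1 hneg⟩
          exact Or.inr ⟨n + 1, hp.pos hd hd0⟩

theorem pcl_pos_move : ∀ {G : PG} {n : ℕ}, PCl G n → 1 ≤ n →
    ∃ i, 0 ≤ (⟦G.moveLeft i⟧ : Game) := by
  intro G n h
  induction h with
  | nil => omega
  | zero hG ih =>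
    intro hn
    obtain ⟨i, hi⟩ := ih hn
    refine ⟨PGame.toLeftMovesAdd (Sum.inr i), ?_⟩
    rw [PGame.add_moveLeft_inr]
    simpa only [quot_add, quot_zero, zero_add] using hi
  | pos hd h0 hG ih =>
    rename_i d G' m
    intro _
    rcases Nat.even_or_odd m with hm | hm
    · obtain ⟨i0, hi0⟩ := sp_kill_left d
      refine ⟨PGame.toLeftMovesAdd (Sum.inl i0), ?_⟩
      rw [PGame.add_moveLeft_inl, hi0]
      simpa only [quot_add, quot_zero, zero_add] using (pcl_main hG).1 hm
    · obtain ⟨a, ha⟩ := hd.exists_left h0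
      obtain ⟨i0, hi0⟩ := sp_left_move d a
      refine ⟨PGame.toLeftMovesAdd (Sum.inl i0), ?_⟩
      rw [PGame.add_moveLeft_inl, hi0]
      have := (pcl_main hG).2.2.2 hm (d.moveLeft a) (hd.moveLeft a) ha
      simpa only [quot_add] using this

theorem pcl_pos_move_star : ∀ {G : PG} {n : ℕ}, PCl G n → 0 ≤ (⟦G⟧ : Game) → 1 ≤ n →
    ∃ i, 0 ≤ (⟦G.moveLeft i⟧ : Game) + ⟦PGame.star⟧ := by
  intro G n h
  induction h with
  | nil => exact fun _ h => absurd h (by omega)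
  | zero hG ih =>
    intro hg hn
    rw [quot_add, quot_zero, zero_add] at hg
    obtain ⟨i, hi⟩ := ih hg hn
    refine ⟨PGame.toLeftMovesAdd (Sum.inr i), ?_⟩
    rw [PGame.add_moveLeft_inr]
    simpa only [quot_add, quot_zero, zero_add] using hi
  | pos hd h0 hG ih =>
    rename_i d G' m
    intro hg _
    obtain ⟨i0, hi0⟩ := sp_kill_left d
    refine ⟨PGame.toLeftMovesAdd (Sum.inl i0), ?_⟩
    rw [PGame.add_moveLeft_inl, hi0]
    have goal_eq : (⟦(0 : PGame) + G'⟧ : Game) = ⟦G'⟧ := by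
      simp only [quot_add, quot_zero, zero_add]
    rw [goal_eq]
    rcases Nat.even_or_odd m with hm | hm
    · rcases Nat.eq_zero_or_pos m with h0' | hpos
      · subst h0'
        exfalso
        have hz := PCl.quot_eq_zero hG
        rw [quot_add, hz, add_zero] at hg
        have : ¬ (0 : Game) ≤ ⟦ordSum PGame.star d⟧ := by
          intro hcon
          exact (PGame.not_le.2 (sp_lf_zero d)) (PGame.le_iff_game_le.2 hcon)
        exact this hg
      · exact pcl_even_pos hG hm (by obtain ⟨k, hk⟩ := hm; omega)
    · exact (pcl_main hG).2.1 hm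

theorem cl_isEmpty_quot : ∀ {G : PG}, Cl G → IsEmpty G.LeftMoves → (⟦G⟧ : Game) = 0 := by
  intro G h
  induction h with
  | nil => intro; rfl
  | cons hc hG' ih =>
    rename_i c G'
    intro hemp
    have hsum : IsEmpty (c.LeftMoves ⊕ G'.LeftMoves) :=
      (Equiv.isEmpty_congr PGame.toLeftMovesAdd).2 hemp
    cases hc with
    | zero =>
      have := ih (isEmpty_sum.1 hsum).2
      rw [quot_add, this, add_zero, quot_zero]
    | spr hd =>
      rename_i d
      obtain ⟨i0, _⟩ := sp_kill_left d
      exact ((isEmpty_sum.1 hsum).1.false i0).elim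

theorem main3 (G : PG) (hG : Cl G) : (mw G).1 ↔ (0 : PGame) ⧏ G + PGame.star := by
  have hM4 : ∀ i, (¬ (mw (G.moveLeft i)).2 ↔ 0 ≤ G.moveLeft i + PGame.star) := by
    intro i
    have hrec := main3 (-(G.moveLeft i)) (hG.moveLeft i).neg
    rw [(mw_neg (G.moveLeft i)).1] at hrec
    rw [show -(G.moveLeft i) + PGame.star = -(G.moveLeft i + PGame.star) by
      rw [neg_add_eq', PGame.neg_star], PGame.zero_lf_neg_iff] at hrec
    rw [hrec, PGame.not_lf]
  rw [mw1_iff, PGame.zero_lf_le]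
  rw [show (∃ i, 0 ≤ (G + PGame.star).moveLeft i) ↔ _ from
    exists_leftMoves_add' G PGame.star (fun z => 0 ≤ z)]
  rw [show (∃ u, 0 ≤ G + PGame.star.moveLeft u) ↔ 0 ≤ G + 0 from
    exists_leftMoves_star (fun z => 0 ≤ G + z)]
  constructor
  · rintro (hemp | ⟨i, hi⟩)
    · refine Or.inr ?_
      have hz := cl_isEmpty_quot hG hemp
      refine PGame.le_iff_game_le.2 ?_
      simp only [quot_add, quot_zero, hz, add_zero, le_refl]
    · exact Or.inl ⟨i, (hM4 i).1 hi⟩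
  · rintro (⟨i, hi⟩ | hG0)
    · exact Or.inr ⟨i, (hM4 i).2 hi⟩
    · have hg : 0 ≤ (⟦G⟧ : Game) := by
        have := PGame.le_iff_game_le.1 hG0
        simpa only [quot_add, quot_zero, add_zero] using this
      rcases kill_or_pos hG with ⟨i, hi⟩ | ⟨n, hp⟩
      · refine Or.inr ⟨i, (hM4 i).2 ?_⟩
        refine PGame.le_iff_game_le.2 ?_
        simp only [quot_add, quot_zero]
        calc (0 : Game) ≤ ⟦G⟧ := hg
          _ = (⟦G⟧ + ⟦PGame.star⟧) + ⟦PGame.star⟧ := by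
            rw [add_assoc, quot_star_add_star, add_zero]
          _ ≤ ⟦G.moveLeft i⟧ + ⟦PGame.star⟧ := add_le_add_left hi _
      · rcases Nat.eq_zero_or_pos n with rfl | hn
        · exact Or.inl hp.isEmpty
        · obtain ⟨i, hi⟩ := pcl_pos_move_star hp hg hn
          refine Or.inr ⟨i, (hM4 i).2 ?_⟩
          refine PGame.le_iff_game_le.2 ?_
          simpa only [quot_add, quot_zero] using hi
termination_by G.birthday
decreasing_by
  rw [PGame.birthday_neg]
  exact PGame.birthday_moveLeft_lt i

theorem main4 (G : PG) (hG : Cl G) : (mw G).2 ↔ G + PGame.star ⧏ 0 := by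
  have h := main3 (-G) hG.neg
  rw [(mw_neg G).1, show -G + PGame.star = -(G + PGame.star) by
    rw [neg_add_eq', PGame.neg_star], PGame.zero_lf_neg_iff] at h
  exact h

theorem main1 (G : PG) (hG : Cl G) : (mw (G + PGame.star)).1 ↔ (0 : PGame) ⧏ G := by
  have hM2 : ∀ i, (¬ (mw (G.moveLeft i + PGame.star)).2 ↔ 0 ≤ G.moveLeft i) := by
    intro i
    have hrec := main1 (-(G.moveLeft i)) (hG.moveLeft i).neg
    rw [show -(G.moveLeft i) + PGame.star = -(G.moveLeft i + PGame.star) by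
      rw [neg_add_eq', PGame.neg_star], (mw_neg (G.moveLeft i + PGame.star)).1,
      PGame.zero_lf_neg_iff] at hrec
    rw [hrec, PGame.not_lf]
  rw [mw1_iff]
  have hne : ¬ IsEmpty (G + PGame.star).LeftMoves := fun he =>
    he.false (PGame.toLeftMovesAdd (Sum.inr PUnit.unit))
  rw [or_iff_right hne]
  rw [show (∃ i, ¬ (mw ((G + PGame.star).moveLeft i)).2) ↔ _ from
    exists_leftMoves_add' G PGame.star (fun z => ¬ (mw z).2)]
  rw [show (∃ u, ¬ (mw (G + PGame.star.moveLeft u)).2) ↔ ¬ (mw (G + 0)).2 from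
    exists_leftMoves_star (fun z => ¬ (mw (G + z)).2)]
  rw [show (¬ (mw (G + 0)).2) = ¬ (mw G).2 from congrArg Not (propext (mw_add_zero G).2)]
  rw [show (¬ (mw G).2) = (0 ≤ G + PGame.star) from
    propext (by rw [main4 G hG, PGame.not_lf])]
  rw [PGame.zero_lf_le]
  constructor
  · rintro (⟨i, hi⟩ | hGs)
    · exact ⟨i, (hM2 i).1 hi⟩
    · have hg : 0 ≤ (⟦G⟧ : Game) + ⟦PGame.star⟧ := by
        have := PGame.le_iff_game_le.1 hGs
        simpa only [quot_add, quot_zero] using this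
      rcases kill_or_pos hG with ⟨i, hi⟩ | ⟨n, hp⟩
      · exact ⟨i, PGame.le_iff_game_le.2 (by
          simp only [quot_zero]
          calc (0 : Game) ≤ ⟦G⟧ + ⟦PGame.star⟧ := hg
            _ ≤ ⟦G.moveLeft i⟧ := hi)⟩
      · rcases Nat.eq_zero_or_pos n with rfl | hn
        · exfalso
          have hz := hp.quot_eq_zero
          rw [hz, zero_add] at hg
          exact (PGame.not_le.2 PGame.star_fuzzy_zero.1) (PGame.le_iff_game_le.2 hg)
        · obtain ⟨i, hi⟩ := pcl_pos_move hp hn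
          exact ⟨i, PGame.le_iff_game_le.2 (by simpa only [quot_zero] using hi)⟩
  · rintro ⟨i, hi⟩
    exact Or.inl ⟨i, (hM2 i).2 hi⟩
termination_by G.birthday
decreasing_by
  rw [PGame.birthday_neg]
  exact PGame.birthday_moveLeft_lt i

theorem main2 (G : PG) (hG : Cl G) : (mw (G + PGame.star)).2 ↔ G ⧏ 0 := by
  have h := main1 (-G) hG.neg
  rw [show -G + PGame.star = -(G + PGame.star) by rw [neg_add_eq', PGame.neg_star],
    (mw_neg (G + PGame.star)).1, PGame.zero_lf_neg_iff] at h
  exact h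

theorem cl_of_ssb : ∀ {G : PG}, SumOfStarBased G → Cl G := by
  intro G h
  induction h with
  | zero => exact Cl.nil
  | addPos hq _ ih => exact Cl.cons (Item.spr (Nice_qGame _)) ih
  | addNeg hq _ ih => exact Cl.cons (Item.spr (Nice_qGame _).neg) ih

theorem outcomeOf_congr {a a' b b' : Prop} (h1 : a ↔ a') (h2 : b ↔ b') :
    outcomeOf a b = outcomeOf a' b' := by
  rw [propext h1, propext h2]

/-- For a finite sum `G` of star-based numbers, `o⁺(G) = o⁻(G + *)` and
`o⁺(G + *) = o⁻(G)`. -/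
theorem stmt14 (G : PG) (hG : SumOfStarBased G) :
    no G = mo (G + PGame.star) ∧ no (G + PGame.star) = mo G := by
  have hCl := cl_of_ssb hG
  constructor
  · show outcomeOf (nw G).1 (nw G).2
      = outcomeOf (mw (G + PGame.star)).1 (mw (G + PGame.star)).2
    exact outcomeOf_congr ((nw_iff G).1.trans (main1 G hCl).symm)
      ((nw_iff G).2.trans (main2 G hCl).symm)
  · show outcomeOf (nw (G + PGame.star)).1 (nw (G + PGame.star)).2
      = outcomeOf (mw G).1 (mw G).2
    exact outcomeOf_congr ((nw_iff _).1.trans (main3 G hCl).symm)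
      ((nw_iff _).2.trans (main4 G hCl).symm)

end Sprigs
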